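/- arXiv:1311.6176 — 5 statements merged into one kernel-verified Lean document; each statement's English description precedes it below -/
import Mathlib

section
/- Let A be a finite set of integers and let E(A,A) denote the number of quadruples (a1,a2,a3,a4) in A^4 with a1+a2=a3+a4. Suppose E(A,A) ≥ |A|^3/K for some real K > 0. Then there exists a set H of integers with |H| ≥ |A|/(2K) such that for every h in H, the intersection A ∩ (A+h) has at least |A|/(2K) elements. -/
open Finset

theorem stmt0 (A : Finset ℤ) (K : ℝ) (hK : 0 < K)
    (hE : ((A.card : ℝ))^3 / K ≤
      ((((A ×ˢ A) ×ˢ (A ×ˢ A)).filter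
        (fun x => x.1.1 + x.1.2 = x.2.1 + x.2.2)).card : ℝ)) :
    ∃ H : Finset ℤ, (A.card : ℝ) / (2*K) ≤ (H.card : ℝ) ∧
      ∀ h ∈ H, (A.card : ℝ) / (2*K) ≤ ((A ∩ A.image (· + h)).card : ℝ) := by
  classical
  set n := A.card with hn
  set r : ℤ → ℕ := fun h => ((A ×ˢ A).filter (fun p => p.1 - p.2 = h)).card with hrdef
  have hr_card : ∀ h : ℤ, (A ∩ A.image (· + h)).card = r h := by
    intro h
    apply Finset.card_bij (fun x _ => ((x, x - h) : ℤ × ℤ))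
    · intro x hx
      simp only [mem_inter, mem_image] at hx
      obtain ⟨hxA, a, haA, hax⟩ := hx
      simp only [mem_filter, mem_product]
      refine ⟨⟨hxA, ?_⟩, by ring⟩
      have : x - h = a := by omega
      rwa [this]
    · intro a ha b hb hab
      exact (Prod.mk.injEq _ _ _ _ ▸ hab).1
    · intro p hp
      simp only [mem_filter, mem_product] at hp
      obtain ⟨⟨h1, h2⟩, h3⟩ := hp
      refine ⟨p.1, ?_, ?_⟩
      · simp only [mem_inter, mem_image]
        exact ⟨h1, p.2, h2, by omega⟩
      · have : p.1 - h = p.2 := by omega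
        simp [this]
  set D := (A ×ˢ A).image (fun p => p.1 - p.2) with hD
  have key : (((A ×ˢ A) ×ˢ (A ×ˢ A)).filter
        (fun x => x.1.1 + x.1.2 = x.2.1 + x.2.2)).card
      = ∑ h ∈ D, (r h)^2 := by
    have hb : (((A ×ˢ A) ×ˢ (A ×ˢ A)).filter
        (fun x => x.1.1 + x.1.2 = x.2.1 + x.2.2)).card
        = (D.biUnion (fun h => ((A ×ˢ A).filter (fun p => p.1 - p.2 = h)) ×ˢ
            ((A ×ˢ A).filter (fun p => p.1 - p.2 = h)))).card := by
      apply Finset.card_bij (fun x _ => (((x.1.1, x.2.1), (x.2.2, x.1.2)) : (ℤ × ℤ) × (ℤ × ℤ)))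
      · intro x hx
        simp only [mem_filter, mem_product] at hx
        obtain ⟨⟨⟨h1, h2⟩, h3, h4⟩, h5⟩ := hx
        refine Finset.mem_biUnion.mpr ⟨x.1.1 - x.2.1,
          Finset.mem_image.mpr ⟨(x.1.1, x.2.1), Finset.mem_product.mpr ⟨h1, h3⟩, rfl⟩,
          Finset.mem_product.mpr ⟨Finset.mem_filter.mpr ⟨Finset.mem_product.mpr ⟨h1, h3⟩, rfl⟩,
            Finset.mem_filter.mpr ⟨Finset.mem_product.mpr ⟨h4, h2⟩, by dsimp only; omega⟩⟩⟩
      · intro a ha b hb hab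
        simp only [Prod.mk.injEq] at hab
        obtain ⟨⟨e1, e2⟩, e3, e4⟩ := hab
        ext <;> simp_all
      · intro y hy
        simp only [mem_biUnion, mem_product, mem_filter] at hy
        obtain ⟨h, _, ⟨⟨b1A, b2A⟩, hd1⟩, ⟨b3A, b4A⟩, hd2⟩ := hy
        refine ⟨((y.1.1, y.2.2), (y.1.2, y.2.1)), ?_, rfl⟩
        simp only [mem_filter, mem_product]
        exact ⟨⟨⟨b1A, b4A⟩, b2A, b3A⟩, by omega⟩
    rw [hb, Finset.card_biUnion]
    · refine Finset.sum_congr rfl fun h _ => ?_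
      rw [Finset.card_product, sq]
    · intro a _ b _ hab
      simp only [Finset.disjoint_left]
      intro x hx hx'
      simp only [mem_product, mem_filter] at hx hx'
      exact hab (hx.1.2 ▸ hx'.1.2 ▸ rfl)
  have hsum : ∑ h ∈ D, r h = n^2 := by
    have h := Finset.card_eq_sum_card_image (fun p : ℤ × ℤ => p.1 - p.2) (A ×ˢ A)
    rw [Finset.card_product] at h
    rw [sq]
    exact h.symm
  have hrle : ∀ h, r h ≤ n := by
    intro h
    rw [← hr_card h]
    exact Finset.card_le_card (Finset.inter_subset_left)
  set H := D.filter (fun h => (n : ℝ) / (2*K) ≤ (r h : ℝ)) with hH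
  refine ⟨H, ?_, ?_⟩
  · rcases Nat.eq_zero_or_pos n with h0 | hpos
    · rw [h0]
      simp
    -- main estimate
    have hEsum : ((n : ℝ))^3 / K ≤ ∑ h ∈ D, ((r h : ℝ))^2 := by
      have hc : ((((A ×ˢ A) ×ˢ (A ×ˢ A)).filter
          (fun x => x.1.1 + x.1.2 = x.2.1 + x.2.2)).card : ℝ)
          = ∑ h ∈ D, ((r h : ℝ))^2 := by
        rw [key]; push_cast; rfl
      linarith [hE, hc]
    have hsplit : ∑ h ∈ D, ((r h : ℝ))^2
        = ∑ h ∈ H, ((r h : ℝ))^2 + ∑ h ∈ D \ H, ((r h : ℝ))^2 := by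
      have hHD : H ⊆ D := Finset.filter_subset _ _
      rw [← Finset.sum_sdiff hHD]
      ring
    have h1 : ∑ h ∈ H, ((r h : ℝ))^2 ≤ (H.card : ℝ) * (n : ℝ)^2 := by
      calc ∑ h ∈ H, ((r h : ℝ))^2 ≤ ∑ h ∈ H, ((n : ℝ))^2 := by
            apply Finset.sum_le_sum
            intro h _
            have := hrle h
            have : (r h : ℝ) ≤ (n : ℝ) := by exact_mod_cast this
            exact pow_le_pow_left₀ (by positivity) this 2
        _ = (H.card : ℝ) * (n : ℝ)^2 := by rw [Finset.sum_const, nsmul_eq_mul]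
    have h2 : ∑ h ∈ D \ H, ((r h : ℝ))^2 ≤ ((n : ℝ)/(2*K)) * ∑ h ∈ D, (r h : ℝ) := by
      calc ∑ h ∈ D \ H, ((r h : ℝ))^2 ≤ ∑ h ∈ D \ H, ((n : ℝ)/(2*K)) * (r h : ℝ) := by
            apply Finset.sum_le_sum
            intro h hh
            simp only [Finset.mem_sdiff, hH, Finset.mem_filter, not_and, not_le] at hh
            have hlt : (r h : ℝ) < (n : ℝ)/(2*K) := hh.2 hh.1
            have hm := mul_le_mul_of_nonneg_right hlt.le
              (by positivity : (0:ℝ) ≤ (r h : ℝ))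
            nlinarith [hm]
        _ = ((n : ℝ)/(2*K)) * ∑ h ∈ D \ H, (r h : ℝ) := by rw [Finset.mul_sum]
        _ ≤ ((n : ℝ)/(2*K)) * ∑ h ∈ D, (r h : ℝ) := by
            apply mul_le_mul_of_nonneg_left
            · exact Finset.sum_le_sum_of_subset_of_nonneg (Finset.sdiff_subset)
                (fun i _ _ => Nat.cast_nonneg _)
            · positivity
    have hsum' : ∑ h ∈ D, (r h : ℝ) = (n : ℝ)^2 := by
      rw [← Nat.cast_sum, hsum]; push_cast; rfl
    have hfinal : ((n : ℝ))^3 / K ≤ (H.card : ℝ) * (n : ℝ)^2 + ((n : ℝ)/(2*K)) * (n : ℝ)^2 := by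
      rw [hsplit] at hEsum
      linarith [hEsum, h1, h2, hsum' ▸ h2]
    have hnpos : (0 : ℝ) < (n : ℝ) := by exact_mod_cast hpos
    have expand : ((n:ℝ))^3 / K = (n:ℝ)/(2*K) * (n:ℝ)^2 + ((n:ℝ)/(2*K)) * (n:ℝ)^2 := by
      field_simp; ring
    rw [expand] at hfinal
    have : (n:ℝ)/(2*K) * (n:ℝ)^2 ≤ (H.card : ℝ) * (n : ℝ)^2 := by linarith
    exact le_of_mul_le_mul_right this (by positivity : (0:ℝ) < (n:ℝ)^2)
  · intro h hh
    simp only [hH, Finset.mem_filter] at hh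
    rw [hr_card h]
    exact hh.2
end

section
/- For all positive real numbers a, b with a + b ≤ 1, one has 1/a + 1/b ≥ 4 + 2(1-2a)^2 + 2(1-2b)^2. -/
theorem stmt1 (a b : ℝ) (ha : 0 < a) (hb : 0 < b) (hab : a + b ≤ 1) :
    4 + 2*(1 - 2*a)^2 + 2*(1 - 2*b)^2 ≤ 1/a + 1/b := by
  rw [div_add_div _ _ (ne_of_gt ha) (ne_of_gt hb), le_div_iff₀ (by positivity)]
  have h1 : 0 ≤ 1 - a - b := by linarith
  have h2 : 4*a*b ≤ 1 := by nlinarith [sq_nonneg (a-b)]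
  have h3 : 0 ≤ b*(4*a^2-2*a+1) + a*(4*b^2-2*b+1) := by nlinarith [sq_nonneg (2*a-1), sq_nonneg (2*b-1)]
  nlinarith [mul_nonneg h1 h3, mul_nonneg (sq_nonneg (a-b)) (by linarith : (0:ℝ) ≤ 1 - 4*a*b)]
end

section
/- Let p be a prime and let S be a nonempty proper subset of ℤ/pℤ with |S| < 1/ε for a real number ε ∈ (0,1). If h ∈ ℤ/pℤ satisfies |S ∩ (S+h)| ≥ (1-ε)|S|, then h = 0. -/
open Finset

theorem stmt7 (p : ℕ) [NeZero p] (hp : p.Prime) (S : Finset (ZMod p)) (hS : S.Nonempty)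
    (hSproper : S ≠ Finset.univ) (ε : ℝ) (hε0 : 0 < ε) (hε1 : ε < 1)
    (hSsmall : (S.card : ℝ) < 1/ε) (h : ZMod p)
    (hh : (1 - ε) * (S.card : ℝ) ≤ ((S ∩ S.image (· + h)).card : ℝ)) :
    h = 0 := by
  by_contra hne
  -- ε * |S| < 1
  have hεS : ε * (S.card : ℝ) < 1 := by
    have := (mul_lt_mul_iff_right₀ hε0).2 hSsmall
    rwa [mul_one_div, div_self (ne_of_gt hε0)] at this
  have hcard : S.card ≤ (S ∩ S.image (· + h)).card := by
    have : (S.card : ℝ) - 1 < ((S ∩ S.image (· + h)).card : ℝ) := by nlinarith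
    have : (S.card : ℝ) < ((S ∩ S.image (· + h)).card : ℝ) + 1 := by linarith
    exact_mod_cast Nat.lt_add_one_iff.mp (by exact_mod_cast this)
  have hinter : S ∩ S.image (· + h) = S :=
    eq_of_subset_of_card_le (inter_subset_left) hcard
  have hsub : S ⊆ S.image (· + h) := by
    intro x hx
    have : x ∈ S ∩ S.image (· + h) := by rw [hinter]; exact hx
    exact (mem_inter.mp this).2
  have himg : S.image (· + h) = S := by
    apply (eq_of_subset_of_card_le hsub ?_).symm
    exact le_of_eq (card_image_of_injective S (add_left_injective h))
  -- S is closed under adding h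
  have hclosed : ∀ x ∈ S, x + h ∈ S := by
    intro x hx
    rw [← himg]
    exact mem_image_of_mem _ hx
  obtain ⟨s, hs⟩ := hS
  have hiter : ∀ n : ℕ, s + n • h ∈ S := by
    intro n
    induction n with
    | zero => simpa using hs
    | succ k ih =>
      have := hclosed _ ih
      rw [succ_nsmul, ← add_assoc]
      exact this
  -- every element of ZMod p is in S
  apply hSproper
  apply Finset.eq_univ_of_forall
  intro x
  haveI : Fact p.Prime := ⟨hp⟩
  have hk : s + ((x - s) * h⁻¹).val • h = x := by
    rw [nsmul_eq_mul, ZMod.natCast_val, ZMod.cast_id]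
    field_simp
    ring
  have := hiter ((x - s) * h⁻¹).val
  rwa [hk] at this
end

section
/- Let S be a nonempty subset of ℤ/pℤ (p prime), let ε > 0 be small with |S| < (1-2ε)p and |S| ≥ 1/ε. Assuming Pollard's inequality, namely N_1 + ⋯ + N_r ≥ r(2|S|-r) for all integers r with 2|S|-p ≤ r ≤ |S| where N_i = #{h ∈ ℤ/pℤ : |S ∩ (S+h)| ≥ i}, the number of h ∈ ℤ/pℤ with |S ∩ (S+h)| ≥ (1-ε)|S| is at most 4ε|S| + 1. -/
open Finset

theorem stmt8 (p : ℕ) [NeZero p] (hp : p.Prime) (S : Finset (ZMod p)) (hS : S.Nonempty)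
    (ε : ℝ) (hε : 0 < ε) (hSsize : (S.card : ℝ) < (1 - 2*ε) * p)
    (hSbig : 1 ≤ ε * (S.card : ℝ))
    (N : ℕ → ℕ)
    (hN : ∀ i, N i = (Finset.univ.filter
      (fun h : ZMod p => i ≤ (S ∩ S.image (· + h)).card)).card)
    (hPollard : ∀ r : ℕ, (2 * (S.card : ℤ)) - p ≤ (r : ℤ) → r ≤ S.card →
      ((r : ℤ) * (2 * S.card - r)) ≤ ∑ i ∈ Finset.Icc 1 r, (N i : ℤ)) :
    ((Finset.univ.filter
      (fun h : ZMod p => (1 - ε) * (S.card : ℝ) ≤ ((S ∩ S.image (· + h)).card : ℝ))).card : ℝ)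
      ≤ 4 * ε * (S.card : ℝ) + 1 := by
  classical
  set m := S.card with hm
  have hfm : ∀ h : ZMod p, (S ∩ S.image (· + h)).card ≤ m :=
    fun h => card_le_card inter_subset_left
  -- total sum identity
  have hfsum : ∑ h : ZMod p, (S ∩ S.image (· + h)).card = m * m := by
    have h1 : ∀ h : ZMod p, (S ∩ S.image (· + h)) = S.filter (fun a => a - h ∈ S) := by
      intro h
      ext a
      simp only [mem_inter, mem_image, mem_filter]
      constructor
      · rintro ⟨ha, b, hb, rfl⟩; exact ⟨ha, by simpa using hb⟩
      · rintro ⟨ha, hb⟩; exact ⟨ha, a - h, hb, by ring⟩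
    calc ∑ h : ZMod p, (S ∩ S.image (· + h)).card
        = ∑ h : ZMod p, ∑ a ∈ S, if a - h ∈ S then 1 else 0 := by
          refine Finset.sum_congr rfl fun h _ => ?_
          rw [h1 h, Finset.card_filter]
      _ = ∑ a ∈ S, ∑ h : ZMod p, if a - h ∈ S then 1 else 0 := Finset.sum_comm
      _ = ∑ a ∈ S, (univ.filter (fun h : ZMod p => a - h ∈ S)).card := by
          refine Finset.sum_congr rfl fun a _ => ?_
          rw [Finset.card_filter]
      _ = ∑ a ∈ S, m := by
          refine Finset.sum_congr rfl fun a _ => ?_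
          have himg : univ.filter (fun h : ZMod p => a - h ∈ S) = S.image (fun b => a - b) := by
            ext h
            simp only [mem_filter, mem_univ, true_and, mem_image]
            constructor
            · intro hh; exact ⟨a - h, hh, by ring⟩
            · rintro ⟨b, hb, rfl⟩; simpa using hb
          rw [himg, Finset.card_image_of_injective _ sub_right_injective]
      _ = m * m := by simp [mul_comm, hm]
  have hNsum : ∑ i ∈ Finset.Ioc 0 m, N i = m * m := by
    calc ∑ i ∈ Finset.Ioc 0 m, N i
        = ∑ i ∈ Finset.Ioc 0 m, ∑ h : ZMod p,
            if i ≤ (S ∩ S.image (· + h)).card then 1 else 0 := by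
          refine Finset.sum_congr rfl fun i _ => ?_
          rw [hN i, Finset.card_filter]
      _ = ∑ h : ZMod p, ∑ i ∈ Finset.Ioc 0 m,
            if i ≤ (S ∩ S.image (· + h)).card then 1 else 0 := Finset.sum_comm
      _ = ∑ h : ZMod p, (S ∩ S.image (· + h)).card := by
          refine Finset.sum_congr rfl fun h _ => ?_
          rw [← Finset.card_filter]
          have : (Finset.Ioc 0 m).filter (fun i => i ≤ (S ∩ S.image (· + h)).card)
              = Finset.Ioc 0 ((S ∩ S.image (· + h)).card) := by
            ext i
            simp only [mem_filter, mem_Ioc]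
            have := hfm h
            omega
          rw [this, Nat.card_Ioc]; omega
      _ = m * m := hfsum
  -- numeric setup
  have hppos : (0:ℝ) < p := by exact_mod_cast hp.pos
  have hmpos : 0 < m := card_pos.mpr hS
  have hmR : (1:ℝ) ≤ m := by exact_mod_cast hmpos
  set s := ⌊ε * (m:ℝ)⌋₊ with hs
  have hs1 : 1 ≤ s := Nat.le_floor (by exact_mod_cast hSbig)
  have hsle : (s : ℝ) ≤ ε * m := Nat.floor_le (by positivity)
  have hε2 : 2 * ε < 1 := by nlinarith
  have h2s : 2 * s < m := by
    have : ((2*s : ℕ) : ℝ) < m := by push_cast; nlinarith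
    exact_mod_cast this
  have hmleP : (m:ℝ) ≤ p := by nlinarith
  have hmp : m + 2*s < p := by
    have : ((m + 2*s : ℕ) : ℝ) < p := by push_cast; nlinarith
    exact_mod_cast this
  -- T is contained in each filter set up to level m - s
  set T := Finset.univ.filter
      (fun h : ZMod p => (1 - ε) * (m : ℝ) ≤ ((S ∩ S.image (· + h)).card : ℝ)) with hT
  have hTsub : ∀ i, i ≤ m - s → (T.card : ℤ) ≤ N i := by
    intro i hi
    rw [hN i]
    have hsub : T ⊆ univ.filter (fun h : ZMod p => i ≤ (S ∩ S.image (· + h)).card) := by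
      intro h hh
      simp only [hT, mem_filter, mem_univ, true_and] at hh ⊢
      by_contra hcon
      push_neg at hcon
      have h1 : (m : ℝ) - (S ∩ S.image (· + h)).card ≤ ε * m := by linarith
      have h2 : m - (S ∩ S.image (· + h)).card ≤ s := by
        refine Nat.le_floor ?_
        rw [Nat.cast_sub (hfm h)]
        exact h1
      have h3 := hfm h
      omega
    exact_mod_cast card_le_card hsub
  have key : (s : ℤ) * T.card ≤ ∑ i ∈ Finset.Ioc (m - 2*s) (m - s), (N i : ℤ) := by
    have hcard : (Finset.Ioc (m - 2*s) (m - s)).card = s := by rw [Nat.card_Ioc]; omega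
    calc (s:ℤ) * T.card = ∑ _i ∈ Finset.Ioc (m - 2*s) (m - s), (T.card : ℤ) := by
          rw [Finset.sum_const, hcard]; simp [mul_comm]
      _ ≤ ∑ i ∈ Finset.Ioc (m - 2*s) (m - s), (N i : ℤ) :=
          Finset.sum_le_sum fun i hi => hTsub i (by have := (mem_Ioc.mp hi).2; omega)
  have hsplit : ∑ i ∈ Finset.Ioc 0 (m - 2*s), (N i:ℤ)
      + ∑ i ∈ Finset.Ioc (m - 2*s) (m - s), (N i:ℤ)
      = ∑ i ∈ Finset.Ioc 0 (m - s), (N i:ℤ) :=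
    Finset.sum_Ioc_consecutive _ (by omega) (by omega)
  have hmono : ∑ i ∈ Finset.Ioc 0 (m - s), (N i:ℤ) ≤ ∑ i ∈ Finset.Ioc 0 m, (N i:ℤ) :=
    Finset.sum_le_sum_of_subset_of_nonneg (Finset.Ioc_subset_Ioc le_rfl (by omega))
      (fun i _ _ => by positivity)
  have htot : ∑ i ∈ Finset.Ioc 0 m, (N i:ℤ) = (m:ℤ) * m := by exact_mod_cast hNsum
  have hIcc : Finset.Icc 1 (m - 2*s) = Finset.Ioc 0 (m - 2*s) := by
    ext i; simp only [mem_Icc, mem_Ioc]; omega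
  have hrZ : ((m - 2*s : ℕ):ℤ) = (m:ℤ) - 2*s := by omega
  have hPol := hPollard (m - 2*s) (by omega) (by omega)
  rw [hIcc, hrZ] at hPol
  have hA : ((m:ℤ) - 2*s) * ((m:ℤ) + 2*s) ≤ ∑ i ∈ Finset.Ioc 0 (m - 2*s), (N i:ℤ) := by
    have heq : ((m:ℤ) - 2*s) * ((m:ℤ) + 2*s) = ((m:ℤ) - 2*s) * (2*(m:ℤ) - ((m:ℤ) - 2*s)) := by
      ring
    linarith [hPol]
  have hexp : ((m:ℤ) - 2*s) * ((m:ℤ) + 2*s) = (m:ℤ)*(m:ℤ) - 4*(s:ℤ)*(s:ℤ) := by ring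
  have hfin : (s:ℤ) * T.card ≤ (s:ℤ) * (4 * s) := by nlinarith
  have hspos : (0:ℤ) < s := by exact_mod_cast hs1
  have hn4s : (T.card : ℤ) ≤ 4 * s := le_of_mul_le_mul_left hfin hspos
  have hn4sR : (T.card : ℝ) ≤ 4 * s := by exact_mod_cast hn4s
  have : (T.card : ℝ) ≤ 4 * ε * m := by nlinarith
  linarith
end

section
/- Let ψ(x) = (ax² + bx + c)/d be a rational quadratic with integer a,b,c,d, a ≠ 0, d ≠ 0, such that ψ(ℚ) ∩ ℤ is nonempty. Define ψ̃(x) = ψ(x/a). Then ψ(ℚ) = ψ̃(ℚ) and every integer in ψ(ℚ) lies in ψ̃(ℤ). -/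
theorem stmt14 (a b c d : ℤ) (ha : a ≠ 0) (hd : d ≠ 0)
    (ψ : ℚ → ℚ) (hψ : ∀ x : ℚ, ψ x = ((a : ℚ) * x^2 + (b : ℚ) * x + (c : ℚ)) / (d : ℚ))
    (ψt : ℚ → ℚ) (hψt : ∀ x : ℚ, ψt x = ψ (x / (a : ℚ)))
    (hnonempty : ∃ q : ℚ, ∃ n : ℤ, ψ q = (n : ℚ)) :
    Set.range ψ = Set.range ψt ∧
      ∀ n : ℤ, (n : ℚ) ∈ Set.range ψ → ∃ m : ℤ, ψt (m : ℚ) = (n : ℚ) := by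
  have haQ : (a : ℚ) ≠ 0 := Int.cast_ne_zero.mpr ha
  have hdQ : (d : ℚ) ≠ 0 := Int.cast_ne_zero.mpr hd
  constructor
  · ext y
    simp only [Set.mem_range]
    constructor
    · rintro ⟨x, rfl⟩
      exact ⟨a * x, by rw [hψt, mul_comm, mul_div_assoc, div_self haQ, mul_one]⟩
    · rintro ⟨x, rfl⟩
      exact ⟨x / a, (hψt x).symm⟩
  · rintro n ⟨q, hq⟩
    have key : (a : ℚ) * q ^ 2 + b * q + c = d * n := by
      rw [hψ] at hq
      field_simp at hq
      linarith [hq]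
    set r : ℚ := a * q with hr
    have hroot : r ^ 2 + (b : ℚ) * r + ((a * c - a * d * n : ℤ) : ℚ) = 0 := by
      push_cast
      rw [hr]
      linear_combination (a : ℚ) * key
    have hint : IsIntegral ℤ r := by
      refine ⟨Polynomial.X ^ 2 + Polynomial.C b * Polynomial.X
        + Polynomial.C (a * c - a * d * n), ?_, ?_⟩
      · monicity!
      · simp only [Polynomial.eval₂_add, Polynomial.eval₂_mul, Polynomial.eval₂_pow,
          Polynomial.eval₂_X, Polynomial.eval₂_C]
        simp only [eq_intCast]
        exact_mod_cast hroot
    obtain ⟨m, hm⟩ := IsIntegrallyClosed.isIntegral_iff.mp hint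
    refine ⟨m, ?_⟩
    have hm' : (m : ℚ) = r := hm
    rw [hψt, show (m : ℚ) / a = q by rw [hm', hr]; field_simp, hq]
end
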